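/- Let X be a bifurcating Markov chain on S with kernel P, induced kernel Q, started at x. Then for bounded measurable f and n ≥ 0, the second moment of M_{G_n}(f) = Σ_{i∈G_n} f(X_i) is E_x[M_{G_n}(f)²] = 2ⁿ Qⁿ(f²)(x) + Σ_{k=0}^{n-1} 2^{n+k} Q^{n-k-1}( P( Q^k f ⊗ Q^k f ) )(x). -/

import Mathlib

open MeasureTheory ProbabilityTheory ENNReal Filter

noncomputable section

/-- Nodes of the full binary tree: a node of generation `n` is a word
`Fin n → Bool`. -/
abbrev TreeNode : Type := Σ n : ℕ, (Fin n → Bool)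

/-- The root `∅` of the binary tree. -/
def rootNode : TreeNode := ⟨0, fun i => i.elim0⟩

/-- The child of the node `i` of generation `k` obtained by appending bit `b`. -/
def childNode {k : ℕ} (i : Fin k → Bool) (b : Bool) : TreeNode := ⟨k + 1, Fin.snoc i b⟩

/-- The action of the marginal mixture kernel `Q = (P₀ + P₁)/2` on real functions. -/
def QR {S : Type*} [MeasurableSpace S] (P : Kernel S (S × S)) (f : S → ℝ) (x : S) : ℝ :=
  (∫ yz, f yz.1 ∂(P x) + ∫ yz, f yz.2 ∂(P x)) / 2

/-- `n`-th iterate of `Q` acting on real functions. -/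
def QRiter {S : Type*} [MeasurableSpace S] (P : Kernel S (S × S)) (n : ℕ) (f : S → ℝ) : S → ℝ :=
  (QR P)^[n] f

/-- `X` is a bifurcating Markov chain on `S` with kernel `P`, on the probability
space `(Ω, m)`: every `X_i` is measurable and the branching Markov property
holds, expressed by integrating bounded measurable functionals of the tree up to
generation `k` against products over generation `k` of functions of
`(X_i, X_{i0}, X_{i1})`. -/
def IsBMC {S Ω : Type*} [MeasurableSpace S] [MeasurableSpace Ω] (m : Measure Ω)
    (P : Kernel S (S × S)) (X : TreeNode → Ω → S) : Prop :=
  (∀ p : TreeNode, Measurable (X p)) ∧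
  ∀ (k : ℕ) (g : (Fin k → Bool) → S → S → S → ℝ),
    (∀ i, Measurable fun p : S × S × S => g i p.1 p.2.1 p.2.2) →
    (∀ i, ∃ C, ∀ a b c, |g i a b c| ≤ C) →
    ∀ F : ({p : TreeNode // p.1 ≤ k} → S) → ℝ,
      Measurable F → (∃ C, ∀ v, |F v| ≤ C) →
      ∫ ω, (∏ i : Fin k → Bool,
          g i (X ⟨k, i⟩ ω) (X (childNode i false) ω) (X (childNode i true) ω))
          * F (fun p => X p.1 ω) ∂m
      = ∫ ω, (∏ i : Fin k → Bool,
          ∫ yz, g i (X ⟨k, i⟩ ω) yz.1 yz.2 ∂(P (X ⟨k, i⟩ ω)))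
          * F (fun p => X p.1 ω) ∂m

set_option linter.unusedSectionVars false
namespace Stmt6Aux

variable {α β : Type*} [MeasurableSpace α] [MeasurableSpace β]

structure BM (f : α → ℝ) : Prop where
  meas : Measurable f
  bdd : ∃ C, ∀ y, |f y| ≤ C

theorem BM.const (c : ℝ) : BM (fun _ : α => c) := ⟨measurable_const, |c|, fun _ => le_rfl⟩

theorem BM.add {f g : α → ℝ} (hf : BM f) (hg : BM g) : BM (fun y => f y + g y) := by
  obtain ⟨C, hC⟩ := hf.bdd; obtain ⟨D, hD⟩ := hg.bdd
  exact ⟨hf.meas.add hg.meas, C + D, fun y =>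
    (abs_add_le _ _).trans (add_le_add (hC y) (hD y))⟩

theorem BM.mul {f g : α → ℝ} (hf : BM f) (hg : BM g) : BM (fun y => f y * g y) := by
  obtain ⟨C, hC⟩ := hf.bdd; obtain ⟨D, hD⟩ := hg.bdd
  refine ⟨hf.meas.mul hg.meas, C * D, fun y => ?_⟩
  rw [abs_mul]
  exact mul_le_mul (hC y) (hD y) (abs_nonneg _) ((abs_nonneg _).trans (hC y))

theorem BM.const_mul {f : α → ℝ} (hf : BM f) (c : ℝ) : BM (fun y => c * f y) :=
  (BM.const c).mul hf

theorem BM.comp {f : α → ℝ} (hf : BM f) {T : β → α} (hT : Measurable T) :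
    BM (fun b => f (T b)) := ⟨hf.meas.comp hT, hf.bdd.imp fun _ h y => h (T y)⟩

theorem BM.integrable {μ : Measure α} [IsFiniteMeasure μ] {f : α → ℝ} (hf : BM f) :
    Integrable f μ := by
  obtain ⟨C, hC⟩ := hf.bdd
  exact (integrable_const C).mono' hf.meas.aestronglyMeasurable
    (Eventually.of_forall fun y => by simpa [Real.norm_eq_abs] using hC y)

theorem abs_integral_le {μ : Measure α} [IsProbabilityMeasure μ] {f : α → ℝ} {C : ℝ}
    (h : ∀ y, |f y| ≤ C) : |∫ y, f y ∂μ| ≤ C := by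
  have := norm_integral_le_of_norm_le_const (μ := μ) (f := f) (C := C)
    (Eventually.of_forall fun y => by simpa [Real.norm_eq_abs] using h y)
  simpa [Real.norm_eq_abs] using this

variable {S : Type*} [MeasurableSpace S] (P : Kernel S (S × S)) [IsMarkovKernel P]

theorem BM.kint {H : S × S → ℝ} (hH : BM H) :
    BM (fun y => ∫ yz, H yz ∂(P y)) := by
  obtain ⟨C, hC⟩ := hH.bdd
  refine ⟨?_, C, fun y => abs_integral_le hC⟩
  exact (StronglyMeasurable.integral_kernel_prod_right'
    ((hH.meas.comp measurable_snd).stronglyMeasurable (f := H ∘ Prod.snd))).measurable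

theorem BM.qr {f : S → ℝ} (hf : BM f) : BM (QR P f) := by
  have h1 : BM (fun y => ∫ yz, f yz.1 ∂(P y)) := BM.kint P (hf.comp measurable_fst)
  have h2 : BM (fun y => ∫ yz, f yz.2 ∂(P y)) := BM.kint P (hf.comp measurable_snd)
  obtain ⟨C, hC⟩ := h1.bdd; obtain ⟨D, hD⟩ := h2.bdd
  refine ⟨(h1.meas.add h2.meas).div_const 2, (C + D) / 2, fun y => ?_⟩
  rw [QR, abs_div]
  have : |(2 : ℝ)| = 2 := by norm_num
  rw [this]
  gcongr
  exact (abs_add_le _ _).trans (add_le_add (hC y) (hD y))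

theorem QRiter_zero (f : S → ℝ) : QRiter P 0 f = f := rfl

theorem QRiter_succ (n : ℕ) (f : S → ℝ) : QRiter P (n + 1) f = QRiter P n (QR P f) :=
  Function.iterate_succ_apply _ _ _

theorem QRiter_succ' (n : ℕ) (f : S → ℝ) : QRiter P (n + 1) f = QR P (QRiter P n f) :=
  Function.iterate_succ_apply' _ _ _

theorem BM.qriter {f : S → ℝ} (hf : BM f) (n : ℕ) : BM (QRiter P n f) := by
  induction n with
  | zero => exact hf
  | succ n ih => rw [QRiter_succ']; exact ih.qr P

theorem QR_add {f g : S → ℝ} (hf : BM f) (hg : BM g) :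
    QR P (fun y => f y + g y) = fun y => QR P f y + QR P g y := by
  funext y
  simp only [QR]
  rw [integral_add ((hf.comp measurable_fst).integrable) ((hg.comp measurable_fst).integrable),
    integral_add ((hf.comp measurable_snd).integrable) ((hg.comp measurable_snd).integrable)]
  ring

theorem QR_smul (c : ℝ) (f : S → ℝ) :
    QR P (fun y => c * f y) = fun y => c * QR P f y := by
  funext y
  simp only [QR]
  rw [integral_const_mul, integral_const_mul]
  ring

theorem QRiter_add (n : ℕ) {f g : S → ℝ} (hf : BM f) (hg : BM g) :
    QRiter P n (fun y => f y + g y) = fun y => QRiter P n f y + QRiter P n g y := by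
  induction n generalizing f g with
  | zero => rfl
  | succ n ih =>
    rw [QRiter_succ, QR_add P hf hg, ih (hf.qr P) (hg.qr P), QRiter_succ, QRiter_succ]

theorem QRiter_smul (n : ℕ) (c : ℝ) (f : S → ℝ) :
    QRiter P n (fun y => c * f y) = fun y => c * QRiter P n f y := by
  induction n generalizing f with
  | zero => rfl
  | succ n ih => rw [QRiter_succ, QR_smul P c f, ih (QR P f), QRiter_succ]

theorem sum_snoc {n : ℕ} (u : (Fin (n + 1) → Bool) → ℝ) :
    ∑ j : Fin (n + 1) → Bool, u j
      = ∑ i : Fin n → Bool, (u (Fin.snoc i false) + u (Fin.snoc i true)) := by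
  rw [← (Fin.snocEquiv (fun _ => Bool)).sum_comp u, Fintype.sum_prod_type]
  rw [Fintype.sum_bool]
  rw [← Finset.sum_add_distrib]
  refine Finset.sum_congr rfl fun i _ => ?_
  rw [add_comm]
  rfl

variable {Ω : Type*} [MeasurableSpace Ω] (m : Measure Ω) [IsProbabilityMeasure m]
  (X : TreeNode → Ω → S)

theorem bmc_step (hX : IsBMC m P X) (n : ℕ) (h : (Fin n → Bool) → S × S → ℝ)
    (hm : ∀ i, Measurable (h i)) (hb : ∀ i, ∃ C, ∀ p, |h i p| ≤ C) :
    ∫ ω, ∏ i : Fin n → Bool, h i (X (childNode i false) ω, X (childNode i true) ω) ∂m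
      = ∫ ω, ∏ i : Fin n → Bool, (∫ yz, h i yz ∂(P (X ⟨n, i⟩ ω))) ∂m := by
  have key := hX.2 n (fun i _ b c => h i (b, c))
    (fun i => (hm i).comp measurable_snd)
    (fun i => (hb i).imp fun C hC a b c => hC (b, c))
    (fun _ => 1) measurable_const ⟨1, fun _ => by norm_num⟩
  simpa using key

theorem hPH {g : S → ℝ} (hg : BM g) :
    ∀ y : S, ∫ yz, (g yz.1 + g yz.2) ∂(P y) = 2 * QR P g y := by
  intro y
  rw [integral_add (hg.comp measurable_fst).integrable (hg.comp measurable_snd).integrable, QR]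
  ring

theorem first_moment (hX : IsBMC m P X) (x : S) (hroot : ∀ ω, X rootNode ω = x) :
    ∀ (n : ℕ) (g : S → ℝ), BM g →
      ∫ ω, ∑ i : Fin n → Bool, g (X ⟨n, i⟩ ω) ∂m = 2 ^ n * QRiter P n g x := by
  intro n
  induction n with
  | zero =>
    intro g hg
    have hnode : ∀ i : Fin 0 → Bool, (⟨0, i⟩ : TreeNode) = rootNode :=
      fun i => congrArg (Sigma.mk 0) (funext fun j => j.elim0)
    simp only [hnode, hroot]
    simp [QRiter_zero]
  | succ n ih =>
    intro g hg
    classical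
    have hsum : ∀ ω, ∑ j : Fin (n + 1) → Bool, g (X ⟨n + 1, j⟩ ω)
        = ∑ i : Fin n → Bool, (g (X (childNode i false) ω) + g (X (childNode i true) ω)) :=
      fun ω => sum_snoc _
    have step : ∀ i : Fin n → Bool,
        ∫ ω, (g (X (childNode i false) ω) + g (X (childNode i true) ω)) ∂m
          = ∫ ω, 2 * QR P g (X ⟨n, i⟩ ω) ∂m := by
      intro i
      obtain ⟨C, hC⟩ := hg.bdd
      have hbs := bmc_step P m X hX n
        (fun ℓ p => if ℓ = i then g p.1 + g p.2 else 1)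
        (fun ℓ => by
          by_cases hli : ℓ = i
          · simp only [if_pos hli]; exact (hg.meas.comp measurable_fst).add (hg.meas.comp measurable_snd)
          · simpa [hli] using measurable_const (a := (1:ℝ)) (m := by infer_instance))
        (fun ℓ => by
          refine ⟨C + C + 1, fun p => ?_⟩
          show |if ℓ = i then g p.1 + g p.2 else 1| ≤ C + C + 1
          have h0 : (0:ℝ) ≤ C := (abs_nonneg _).trans (hC p.1)
          by_cases hli : ℓ = i
          · rw [if_pos hli]
            have := (abs_add_le (g p.1) (g p.2)).trans (add_le_add (hC p.1) (hC p.2))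
            linarith
          · rw [if_neg hli]
            rw [abs_one]
            linarith)
      calc ∫ ω, (g (X (childNode i false) ω) + g (X (childNode i true) ω)) ∂m
          = ∫ ω, ∏ ℓ : Fin n → Bool,
              (if ℓ = i then g (X (childNode ℓ false) ω) + g (X (childNode ℓ true) ω) else 1) ∂m := by
            congr 1; funext ω
            rw [Finset.prod_ite_eq' Finset.univ i
              (fun ℓ => g (X (childNode ℓ false) ω) + g (X (childNode ℓ true) ω))]
            simp
        _ = ∫ ω, ∏ ℓ : Fin n → Bool,
              (∫ yz, (if ℓ = i then g yz.1 + g yz.2 else 1) ∂(P (X ⟨n, ℓ⟩ ω))) ∂m := hbs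
        _ = ∫ ω, 2 * QR P g (X ⟨n, i⟩ ω) ∂m := by
            congr 1; funext ω
            have heval : ∀ ℓ : Fin n → Bool,
                (∫ yz, (if ℓ = i then g yz.1 + g yz.2 else 1) ∂(P (X ⟨n, ℓ⟩ ω)))
                  = if ℓ = i then 2 * QR P g (X ⟨n, ℓ⟩ ω) else 1 := by
              intro ℓ; by_cases hli : ℓ = i <;> simp [hli, hPH P hg]
            rw [Finset.prod_congr rfl fun ℓ _ => heval ℓ, Finset.prod_ite_eq' Finset.univ i
              (fun ℓ => 2 * QR P g (X ⟨n, ℓ⟩ ω))]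
            simp
    calc ∫ ω, ∑ j : Fin (n + 1) → Bool, g (X ⟨n + 1, j⟩ ω) ∂m
        = ∫ ω, ∑ i : Fin n → Bool,
            (g (X (childNode i false) ω) + g (X (childNode i true) ω)) ∂m := by
          simp only [hsum]
      _ = ∑ i : Fin n → Bool,
            ∫ ω, (g (X (childNode i false) ω) + g (X (childNode i true) ω)) ∂m :=
          integral_finset_sum _ fun i _ =>
            ((hg.comp (hX.1 _)).add (hg.comp (hX.1 _))).integrable
      _ = ∑ i : Fin n → Bool, ∫ ω, 2 * QR P g (X ⟨n, i⟩ ω) ∂m :=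
          Finset.sum_congr rfl fun i _ => step i
      _ = ∫ ω, ∑ i : Fin n → Bool, 2 * QR P g (X ⟨n, i⟩ ω) ∂m :=
          (integral_finset_sum _ fun i _ =>
            (((hg.qr P).const_mul 2).comp (hX.1 _)).integrable).symm
      _ = 2 * ∫ ω, ∑ i : Fin n → Bool, QR P g (X ⟨n, i⟩ ω) ∂m := by
          rw [← integral_const_mul]; simp_rw [Finset.mul_sum]
      _ = 2 ^ (n + 1) * QRiter P (n + 1) g x := by
          rw [ih (QR P g) (hg.qr P), ← QRiter_succ]; ring

omit [IsProbabilityMeasure m] in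
theorem BM.pow2 {f : S → ℝ} (hf : BM f) : BM (fun y => f y ^ 2) := by
  have h := hf.mul hf
  simpa [pow_two] using h

theorem BM.sub {α' : Type*} [MeasurableSpace α'] {f g : α' → ℝ} (hf : BM f) (hg : BM g) :
    BM (fun y => f y - g y) := by
  obtain ⟨C, hC⟩ := hf.bdd; obtain ⟨D, hD⟩ := hg.bdd
  exact ⟨hf.meas.sub hg.meas, C + D, fun y =>
    (abs_sub _ _).trans (add_le_add (hC y) (hD y))⟩

theorem BM.finset_sum {α' ι : Type*} [MeasurableSpace α'] (s : Finset ι) (f : ι → α' → ℝ)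
    (h : ∀ i ∈ s, BM (f i)) : BM (fun a => ∑ i ∈ s, f i a) := by
  classical
  induction s using Finset.induction_on with
  | empty => simpa using BM.const 0
  | @insert a s ha ih =>
    simp only [Finset.sum_insert ha]
    exact (h a (Finset.mem_insert_self a s)).add
      (ih fun i hi => h i (Finset.mem_insert_of_mem hi))

def Pff (f : S → ℝ) : S → ℝ := fun y => ∫ yz, f yz.1 * f yz.2 ∂(P y)

def K1 (f : S → ℝ) : S → ℝ := fun y => ∫ yz, (f yz.1 + f yz.2) ∂(P y)

def K2 (f : S → ℝ) : S → ℝ := fun y => ∫ yz, (f yz.1 + f yz.2) * (f yz.1 + f yz.2) ∂(P y)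

theorem BM.pff {f : S → ℝ} (hf : BM f) : BM (Pff P f) :=
  BM.kint P ((hf.comp measurable_fst).mul (hf.comp measurable_snd))

theorem BM.k1 {f : S → ℝ} (hf : BM f) : BM (K1 P f) :=
  BM.kint P ((hf.comp measurable_fst).add (hf.comp measurable_snd))

theorem BM.k2 {f : S → ℝ} (hf : BM f) : BM (K2 P f) :=
  BM.kint P (((hf.comp measurable_fst).add (hf.comp measurable_snd)).mul
    ((hf.comp measurable_fst).add (hf.comp measurable_snd)))

theorem K1_eq {f : S → ℝ} (hf : BM f) (y : S) : K1 P f y = 2 * QR P f y := hPH P hf y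

theorem K2_eq {f : S → ℝ} (hf : BM f) (y : S) :
    K2 P f y = 2 * QR P (fun z => f z ^ 2) y + 2 * Pff P f y := by
  have h1 : Integrable (fun yz : S × S => f yz.1 ^ 2) (P y) :=
    ((hf.pow2).comp measurable_fst).integrable
  have h2 : Integrable (fun yz : S × S => f yz.2 ^ 2) (P y) :=
    ((hf.pow2).comp measurable_snd).integrable
  have h3 : Integrable (fun yz : S × S => 2 * (f yz.1 * f yz.2)) (P y) :=
    (((hf.comp measurable_fst).mul (hf.comp measurable_snd)).const_mul 2).integrable
  have e : ∀ yz : S × S, (f yz.1 + f yz.2) * (f yz.1 + f yz.2)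
      = f yz.1 ^ 2 + (f yz.2 ^ 2 + 2 * (f yz.1 * f yz.2)) := fun yz => by ring
  calc K2 P f y
      = ∫ yz, (f yz.1 ^ 2 + (f yz.2 ^ 2 + 2 * (f yz.1 * f yz.2))) ∂(P y) := by
        simp only [K2, e]
    _ = (∫ yz, f yz.1 ^ 2 ∂(P y)) + ((∫ yz, f yz.2 ^ 2 ∂(P y))
          + ∫ yz, 2 * (f yz.1 * f yz.2) ∂(P y)) := by
        rw [integral_add (f := fun yz : S × S => f yz.1 ^ 2)
          (g := fun yz : S × S => f yz.2 ^ 2 + 2 * (f yz.1 * f yz.2)) h1 (h2.add h3),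
          integral_add h2 h3]
    _ = 2 * QR P (fun z => f z ^ 2) y + 2 * Pff P f y := by
        rw [integral_const_mul]
        simp only [QR, Pff]
        ring

theorem QR_comb (r s t : ℝ) {a b c : S → ℝ} (ha : BM a) (hb : BM b) (hc : BM c) :
    QR P (fun y => r * a y + s * b y + t * c y)
      = fun y => r * QR P a y + s * QR P b y + t * QR P c y := by
  funext y
  have key : ∀ T : S × S → S, Measurable T →
      ∫ yz, (r * a (T yz) + s * b (T yz) + t * c (T yz)) ∂(P y)
        = r * ∫ yz, a (T yz) ∂(P y) + s * ∫ yz, b (T yz) ∂(P y)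
          + t * ∫ yz, c (T yz) ∂(P y) := by
    intro T hT
    rw [integral_add (f := fun yz => r * a (T yz) + s * b (T yz))
        (g := fun yz => t * c (T yz))
        (((ha.comp hT).const_mul r).integrable.add ((hb.comp hT).const_mul s).integrable)
        ((hc.comp hT).const_mul t).integrable,
      integral_add ((ha.comp hT).const_mul r).integrable ((hb.comp hT).const_mul s).integrable,
      integral_const_mul, integral_const_mul, integral_const_mul]
  simp only [QR]
  rw [key Prod.fst measurable_fst, key Prod.snd measurable_snd]
  ring

theorem QRiter_comb (n : ℕ) (r s t : ℝ) {a b c : S → ℝ} (ha : BM a) (hb : BM b) (hc : BM c) :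
    QRiter P n (fun y => r * a y + s * b y + t * c y)
      = fun y => r * QRiter P n a y + s * QRiter P n b y + t * QRiter P n c y := by
  induction n generalizing a b c with
  | zero => rfl
  | succ n ihn =>
    rw [QRiter_succ, QR_comb P r s t ha hb hc, ihn (ha.qr P) (hb.qr P) (hc.qr P),
      ← QRiter_succ, ← QRiter_succ, ← QRiter_succ]

theorem sum_sum_ite {ι : Type*} [Fintype ι] [DecidableEq ι] (A B : ι → ℝ) :
    ∑ i : ι, ∑ j : ι, (if i = j then A i else B i * B j)
      = ∑ i : ι, (A i - B i * B i) + (∑ i : ι, B i) ^ 2 := by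
  have h : ∀ i j : ι, (if i = j then A i else B i * B j)
      = (if i = j then A i - B i * B i else 0) + B i * B j := by
    intro i j
    by_cases hij : i = j
    · subst hij; simp
    · simp [hij]
  simp_rw [h, Finset.sum_add_distrib, Finset.sum_ite_eq, Finset.mem_univ, if_true]
  rw [pow_two, Finset.sum_mul_sum]

theorem second_moment (hX : IsBMC m P X) (x : S) (hroot : ∀ ω, X rootNode ω = x) :
    ∀ (n : ℕ) (f : S → ℝ), BM f →
      ∫ ω, (∑ i : Fin n → Bool, f (X ⟨n, i⟩ ω)) ^ 2 ∂m
        = 2 ^ n * QRiter P n (fun y => f y ^ 2) x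
          + ∑ k ∈ Finset.range n, 2 ^ (n + k) *
              QRiter P (n - k - 1)
                (fun y => ∫ yz, QRiter P k f yz.1 * QRiter P k f yz.2 ∂(P y)) x := by
  intro n
  induction n with
  | zero =>
    intro f hf
    have hnode : ∀ i : Fin 0 → Bool, (⟨0, i⟩ : TreeNode) = rootNode :=
      fun i => congrArg (Sigma.mk 0) (funext fun j => j.elim0)
    simp only [hnode, hroot]
    simp [QRiter_zero]
  | succ n ih =>
    intro f hf
    classical
    obtain ⟨C, hC⟩ := hf.bdd
    have hC0 : (0:ℝ) ≤ C := (abs_nonneg _).trans (hC x)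
    have hHm : Measurable (fun p : S × S => f p.1 + f p.2) :=
      (hf.meas.comp measurable_fst).add (hf.meas.comp measurable_snd)
    have hHb : ∀ p : S × S, |f p.1 + f p.2| ≤ C + C :=
      fun p => (abs_add_le _ _).trans (add_le_add (hC _) (hC _))
    have hK1 : BM (K1 P f) := hf.k1 P
    have hK2 : BM (K2 P f) := hf.k2 P
    have hHcBM : ∀ i : Fin n → Bool,
        BM (fun ω => f (X (childNode i false) ω) + f (X (childNode i true) ω)) :=
      fun i => (hf.comp (hX.1 _)).add (hf.comp (hX.1 _))
    -- the per-pair identity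
    have pair : ∀ i j : Fin n → Bool,
        ∫ ω, (f (X (childNode i false) ω) + f (X (childNode i true) ω))
            * (f (X (childNode j false) ω) + f (X (childNode j true) ω)) ∂m
          = ∫ ω, (if i = j then K2 P f (X ⟨n, i⟩ ω)
              else K1 P f (X ⟨n, i⟩ ω) * K1 P f (X ⟨n, j⟩ ω)) ∂m := by
      intro i j
      have hbs := bmc_step P m X hX n
        (fun ℓ p => (if ℓ = i then f p.1 + f p.2 else 1) * (if ℓ = j then f p.1 + f p.2 else 1))
        (fun ℓ => Measurable.mul
          (by by_cases h : ℓ = i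
              · simp only [if_pos h]; exact hHm
              · simp only [if_neg h]; exact measurable_const)
          (by by_cases h : ℓ = j
              · simp only [if_pos h]; exact hHm
              · simp only [if_neg h]; exact measurable_const))
        (fun ℓ => by
          refine ⟨(C + C + 1) * (C + C + 1), fun p => ?_⟩
          show |(if ℓ = i then f p.1 + f p.2 else 1) * (if ℓ = j then f p.1 + f p.2 else 1)| ≤ _
          have hfac : ∀ (c : Prop) [Decidable c],
              |if c then f p.1 + f p.2 else 1| ≤ C + C + 1 := by
            intro c hc
            by_cases h : c
            · rw [if_pos h]; exact (hHb p).trans (by linarith)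
            · rw [if_neg h, abs_one]; linarith
          rw [abs_mul]
          exact mul_le_mul (hfac _) (hfac _) (abs_nonneg _) (by linarith))
      calc ∫ ω, (f (X (childNode i false) ω) + f (X (childNode i true) ω))
              * (f (X (childNode j false) ω) + f (X (childNode j true) ω)) ∂m
          = ∫ ω, ∏ ℓ : Fin n → Bool,
              ((if ℓ = i then f (X (childNode ℓ false) ω) + f (X (childNode ℓ true) ω) else 1)
               * (if ℓ = j then f (X (childNode ℓ false) ω) + f (X (childNode ℓ true) ω) else 1))
                ∂m := by
            congr 1; funext ω
            rw [Finset.prod_mul_distrib,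
              Finset.prod_ite_eq' Finset.univ i
                (fun ℓ => f (X (childNode ℓ false) ω) + f (X (childNode ℓ true) ω)),
              Finset.prod_ite_eq' Finset.univ j
                (fun ℓ => f (X (childNode ℓ false) ω) + f (X (childNode ℓ true) ω))]
            simp
        _ = ∫ ω, ∏ ℓ : Fin n → Bool,
              (∫ yz, (if ℓ = i then f yz.1 + f yz.2 else 1)
                * (if ℓ = j then f yz.1 + f yz.2 else 1) ∂(P (X ⟨n, ℓ⟩ ω))) ∂m := hbs
        _ = ∫ ω, (if i = j then K2 P f (X ⟨n, i⟩ ω)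
              else K1 P f (X ⟨n, i⟩ ω) * K1 P f (X ⟨n, j⟩ ω)) ∂m := by
            congr 1; funext ω
            by_cases hij : i = j
            · subst hij
              have heval : ∀ ℓ : Fin n → Bool,
                  (∫ yz, (if ℓ = i then f yz.1 + f yz.2 else 1)
                    * (if ℓ = i then f yz.1 + f yz.2 else 1) ∂(P (X ⟨n, ℓ⟩ ω)))
                    = if ℓ = i then K2 P f (X ⟨n, ℓ⟩ ω) else 1 := by
                intro ℓ
                by_cases h : ℓ = i
                · simp only [if_pos h]; rfl
                · simp only [if_neg h, mul_one]; simp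
              rw [Finset.prod_congr rfl fun ℓ _ => heval ℓ,
                Finset.prod_ite_eq' Finset.univ i (fun ℓ => K2 P f (X ⟨n, ℓ⟩ ω))]
              simp
            · have heval : ∀ ℓ : Fin n → Bool,
                  (∫ yz, (if ℓ = i then f yz.1 + f yz.2 else 1)
                    * (if ℓ = j then f yz.1 + f yz.2 else 1) ∂(P (X ⟨n, ℓ⟩ ω)))
                    = (if ℓ = i then K1 P f (X ⟨n, ℓ⟩ ω) else 1)
                      * (if ℓ = j then K1 P f (X ⟨n, ℓ⟩ ω) else 1) := by
                intro ℓ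
                by_cases hli : ℓ = i
                · have hlj : ¬ ℓ = j := fun h => hij (hli ▸ h ▸ rfl)
                  simp only [if_pos hli, if_neg hlj, mul_one]; rfl
                · by_cases hlj : ℓ = j
                  · simp only [if_neg hli, if_pos hlj, one_mul]; rfl
                  · simp only [if_neg hli, if_neg hlj, mul_one]; simp
              rw [Finset.prod_congr rfl fun ℓ _ => heval ℓ, Finset.prod_mul_distrib,
                Finset.prod_ite_eq' Finset.univ i (fun ℓ => K1 P f (X ⟨n, ℓ⟩ ω)),
                Finset.prod_ite_eq' Finset.univ j (fun ℓ => K1 P f (X ⟨n, ℓ⟩ ω))]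
              simp [hij]
    have hcijBM : ∀ i j : Fin n → Bool,
        BM (fun ω => if i = j then K2 P f (X ⟨n, i⟩ ω)
          else K1 P f (X ⟨n, i⟩ ω) * K1 P f (X ⟨n, j⟩ ω)) := by
      intro i j
      by_cases hij : i = j
      · simp only [if_pos hij]; exact hK2.comp (hX.1 _)
      · simp only [if_neg hij]; exact (hK1.comp (hX.1 _)).mul (hK1.comp (hX.1 _))
    have IH2 := ih (QR P f) (hf.qr P)
    calc ∫ ω, (∑ j : Fin (n + 1) → Bool, f (X ⟨n + 1, j⟩ ω)) ^ 2 ∂m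
        = ∫ ω, ∑ i : Fin n → Bool, ∑ j : Fin n → Bool,
            ((f (X (childNode i false) ω) + f (X (childNode i true) ω))
             * (f (X (childNode j false) ω) + f (X (childNode j true) ω))) ∂m := by
          congr 1; funext ω
          rw [sum_snoc (fun j => f (X ⟨n + 1, j⟩ ω)), pow_two, Finset.sum_mul_sum]
          rfl
      _ = ∑ i : Fin n → Bool, ∑ j : Fin n → Bool,
            ∫ ω, ((f (X (childNode i false) ω) + f (X (childNode i true) ω))
             * (f (X (childNode j false) ω) + f (X (childNode j true) ω))) ∂m := by
          rw [integral_finset_sum _ (fun i _ => (BM.finset_sum Finset.univ _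
            (fun j _ => (hHcBM i).mul (hHcBM j))).integrable)]
          exact Finset.sum_congr rfl fun i _ =>
            integral_finset_sum _ fun j _ => ((hHcBM i).mul (hHcBM j)).integrable
      _ = ∑ i : Fin n → Bool, ∑ j : Fin n → Bool,
            ∫ ω, (if i = j then K2 P f (X ⟨n, i⟩ ω)
              else K1 P f (X ⟨n, i⟩ ω) * K1 P f (X ⟨n, j⟩ ω)) ∂m :=
          Finset.sum_congr rfl fun i _ => Finset.sum_congr rfl fun j _ => pair i j
      _ = ∫ ω, ∑ i : Fin n → Bool, ∑ j : Fin n → Bool,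
            (if i = j then K2 P f (X ⟨n, i⟩ ω)
              else K1 P f (X ⟨n, i⟩ ω) * K1 P f (X ⟨n, j⟩ ω)) ∂m := by
          rw [integral_finset_sum _ (fun i _ => (BM.finset_sum Finset.univ _
            (fun j _ => hcijBM i j)).integrable)]
          exact Finset.sum_congr rfl fun i _ =>
            (integral_finset_sum _ fun j _ => (hcijBM i j).integrable).symm
      _ = ∫ ω, (∑ i : Fin n → Bool,
              (K2 P f (X ⟨n, i⟩ ω) - K1 P f (X ⟨n, i⟩ ω) * K1 P f (X ⟨n, i⟩ ω))
            + (∑ i : Fin n → Bool, K1 P f (X ⟨n, i⟩ ω)) ^ 2) ∂m := by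
          congr 1; funext ω
          exact sum_sum_ite (fun i => K2 P f (X ⟨n, i⟩ ω)) (fun i => K1 P f (X ⟨n, i⟩ ω))
      _ = (∫ ω, ∑ i : Fin n → Bool,
              (K2 P f (X ⟨n, i⟩ ω) - K1 P f (X ⟨n, i⟩ ω) * K1 P f (X ⟨n, i⟩ ω)) ∂m)
            + ∫ ω, (∑ i : Fin n → Bool, K1 P f (X ⟨n, i⟩ ω)) ^ 2 ∂m := by
          exact integral_add
            ((BM.finset_sum Finset.univ _ (fun i _ =>
              (hK2.comp (hX.1 _)).sub ((hK1.comp (hX.1 _)).mul (hK1.comp (hX.1 _))))).integrable)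
            ((BM.finset_sum Finset.univ (fun i ω => K1 P f (X ⟨n, i⟩ ω))
              (fun i _ => hK1.comp (hX.1 _))).pow2.integrable)
      _ = 2 ^ n * QRiter P n (fun y => K2 P f y - K1 P f y * K1 P f y) x
            + 4 * ∫ ω, (∑ i : Fin n → Bool, QR P f (X ⟨n, i⟩ ω)) ^ 2 ∂m := by
          congr 1
          · exact first_moment P m X hX x hroot n _
              (hK2.sub (hK1.mul hK1))
          · have hsq : ∀ ω, (∑ i : Fin n → Bool, K1 P f (X ⟨n, i⟩ ω)) ^ 2
                = 4 * (∑ i : Fin n → Bool, QR P f (X ⟨n, i⟩ ω)) ^ 2 := by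
              intro ω
              rw [Finset.sum_congr rfl fun i _ => K1_eq P hf (X ⟨n, i⟩ ω), ← Finset.mul_sum]
              ring
            simp only [hsq]
            rw [integral_const_mul]
      _ = 2 ^ (n + 1) * QRiter P (n + 1) (fun y => f y ^ 2) x
            + ∑ k ∈ Finset.range (n + 1), 2 ^ (n + 1 + k) *
                QRiter P (n + 1 - k - 1)
                  (fun y => ∫ yz, QRiter P k f yz.1 * QRiter P k f yz.2 ∂(P y)) x := by
          rw [IH2]
          have hphi : QRiter P n (fun y => K2 P f y - K1 P f y * K1 P f y) x
              = 2 * QRiter P (n + 1) (fun y => f y ^ 2) x + 2 * QRiter P n (Pff P f) x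
                + (-4) * QRiter P n (fun y => QR P f y ^ 2) x := by
            have e1 : (fun y => K2 P f y - K1 P f y * K1 P f y)
                = (fun y => 2 * QR P (fun z => f z ^ 2) y + 2 * Pff P f y
                    + (-4) * ((fun z => QR P f z ^ 2) y)) := by
              funext y
              rw [K2_eq P hf y, K1_eq P hf y]
              show _ = 2 * QR P (fun z => f z ^ 2) y + 2 * Pff P f y + (-4) * (QR P f y ^ 2)
              ring
            rw [e1, QRiter_comb P n 2 2 (-4) ((hf.pow2).qr P) (hf.pff P) ((hf.qr P).pow2)]
            show 2 * QRiter P n (QR P (fun z => f z ^ 2)) x + _ + _ = _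
            rw [← QRiter_succ]
          have hshift : ∀ k, QRiter P k (QR P f) = QRiter P (k + 1) f :=
            fun k => (QRiter_succ P k f).symm
          simp only [hshift]
          rw [hphi, Finset.sum_range_succ']
          have hfirst : 2 ^ (n + 1 + 0) * QRiter P (n + 1 - 0 - 1)
              (fun y => ∫ yz, QRiter P 0 f yz.1 * QRiter P 0 f yz.2 ∂(P y)) x
              = 2 ^ (n + 1) * QRiter P n (Pff P f) x := by
            norm_num [QRiter_zero]
            rfl
          have hrest : ∀ k ∈ Finset.range n, 2 ^ (n + 1 + (k + 1)) *
              QRiter P (n + 1 - (k + 1) - 1)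
                (fun y => ∫ yz, QRiter P (k + 1) f yz.1 * QRiter P (k + 1) f yz.2 ∂(P y)) x
              = 4 * (2 ^ (n + k) *
                QRiter P (n - k - 1)
                  (fun y => ∫ yz, QRiter P (k + 1) f yz.1 * QRiter P (k + 1) f yz.2 ∂(P y)) x) := by
            intro k _
            have h1 : n + 1 + (k + 1) = n + k + 2 := by omega
            have h2 : n + 1 - (k + 1) - 1 = n - k - 1 := by omega
            rw [h1, h2, pow_add]
            ring
          rw [Finset.sum_congr rfl hrest, hfirst, ← Finset.mul_sum]
          ring

end Stmt6Aux


/-- Second moment formula for a BMC started at `x`: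
`E_x[M_{G_n}(f)²] = 2ⁿ Qⁿ(f²)(x) + ∑_{k<n} 2^{n+k} Q^{n-k-1}(P(Q^k f ⊗ Q^k f))(x)`. -/
theorem stmt6 {S Ω : Type*} [MeasurableSpace S] [MeasurableSpace Ω]
    (m : Measure Ω) [IsProbabilityMeasure m]
    (P : Kernel S (S × S)) [IsMarkovKernel P]
    (X : TreeNode → Ω → S) (hX : IsBMC m P X)
    (x : S) (hroot : ∀ ω, X rootNode ω = x)
    (f : S → ℝ) (hfm : Measurable f) (hfb : ∃ C, ∀ y, |f y| ≤ C) (n : ℕ) :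
    ∫ ω, (∑ i : Fin n → Bool, f (X ⟨n, i⟩ ω)) ^ 2 ∂m
      = 2 ^ n * QRiter P n (fun y => f y ^ 2) x
        + ∑ k ∈ Finset.range n, 2 ^ (n + k) *
            QRiter P (n - k - 1)
              (fun y => ∫ yz, QRiter P k f yz.1 * QRiter P k f yz.2 ∂(P y)) x := by
  exact Stmt6Aux.second_moment P m X hX x hroot n f ⟨hfm, hfb⟩
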